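/- Let I be a normalized scheduling instance. If in some optimal schedule some processor is assigned no task, then I is not minimal. Furthermore, if T'_I(p) = ∅ for some processor p, then I is not minimal or ρ_I = 1. -/
import Mathlib


open Finset

/-- A scheduling instance on uniform processors: `m` processors with positive
speeds `s 1, …, s m`, and `n` tasks with positive sizes `t 1 ≥ … ≥ t n`
(tasks are given in non-increasing order of size, as assumed for LPT). -/
structure SchedInstance where
  m : ℕ
  n : ℕ
  s : ℕ → ℝ
  t : ℕ → ℝ
  hm : 1 ≤ m
  hn : 1 ≤ n
  hs : ∀ p, 1 ≤ p → p ≤ m → 0 < s p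
  ht : ∀ i, 1 ≤ i → i ≤ n → 0 < t i
  tsorted : ∀ i j, 1 ≤ i → i ≤ j → j ≤ n → t j ≤ t i

namespace SchedInstance

variable (I : SchedInstance)

/-- The set of processor indices `{1, …, m}`. -/
def procs : Finset ℕ := Finset.Icc 1 I.m

/-- The set of task indices `{1, …, n}`. -/
def tasks : Finset ℕ := Finset.Icc 1 I.n

lemma procs_nonempty : I.procs.Nonempty := Finset.nonempty_Icc.mpr I.hm

/-- A schedule assigns every task `i ∈ {1,…,n}` a processor `A i ∈ {1,…,m}`. -/
def IsSchedule (A : ℕ → ℕ) : Prop := ∀ i ∈ I.tasks, A i ∈ I.procs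

/-- Total size of the tasks assigned by `A` to processor `p`. -/
noncomputable def load (A : ℕ → ℕ) (p : ℕ) : ℝ :=
  ∑ i ∈ I.tasks.filter (fun i => A i = p), I.t i

/-- The makespan of a schedule `A` : the largest completion time
`(Σ_{A i = p} t i) / s p` over the processors `p`. -/
noncomputable def makespan (A : ℕ → ℕ) : ℝ :=
  I.procs.sup' I.procs_nonempty (fun p => I.load A p / I.s p)

/-- `OPT(I)`: the optimal (minimum) makespan over all schedules. -/
noncomputable def opt : ℝ := sInf {r | ∃ A, I.IsSchedule A ∧ I.makespan A = r}

/-- The completion time of processor `p` if task `i` is added to it while the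
current workloads are `w`. -/
noncomputable def cost (w : ℕ → ℝ) (i p : ℕ) : ℝ := (w p + I.t i) / I.s p

/-- The processor the LPT rule chooses for task `i` given current workloads `w` :
the smallest-index processor minimizing `(w p + t i) / s p`. -/
noncomputable def choose (w : ℕ → ℝ) (i : ℕ) : ℕ :=
  (I.procs.filter
    (fun p => I.cost w i p = I.procs.inf' I.procs_nonempty (I.cost w i))).min'
    (by
      obtain ⟨p, hp, hpe⟩ := Finset.exists_mem_eq_inf' I.procs_nonempty (I.cost w i)
      exact ⟨p, Finset.mem_filter.mpr ⟨hp, hpe.symm⟩⟩)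

/-- `lptW k p` : the workload of processor `p` after the LPT algorithm has
assigned tasks `1, …, k` (in this order). -/
noncomputable def lptW : ℕ → ℕ → ℝ
  | 0, _ => 0
  | (k + 1), p =>
      lptW k p + if I.choose (lptW k) (k + 1) = p ∧ k + 1 ≤ I.n then I.t (k + 1) else 0

/-- `A_I` : the LPT assignment; task `i` goes to the least-index processor
minimizing the resulting completion time, given the previous assignments. -/
noncomputable def lptA (i : ℕ) : ℕ := I.choose (I.lptW (i - 1)) i

/-- `LPT(I)` : the makespan of the LPT schedule. -/
noncomputable def lptTime : ℝ := I.makespan I.lptA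

/-- `ρ_I = LPT(I) / OPT(I)` : the approximation ratio of LPT on instance `I`. -/
noncomputable def ratio : ℝ := I.lptTime / I.opt

/-- `I` is normalized: `OPT(I) = 1`, speeds are non-increasing, and the
smallest task has size `t n = 1`. -/
def Normalized : Prop :=
  I.opt = 1 ∧ (∀ p q, 1 ≤ p → p ≤ q → q ≤ I.m → I.s q ≤ I.s p) ∧ I.t I.n = 1

/-- `I` is minimal: every strictly smaller instance has a strictly smaller
LPT approximation ratio. -/
def Minimal : Prop :=
  ∀ J : SchedInstance, J.m ≤ I.m → J.n ≤ I.n →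
    ¬(J.m = I.m ∧ J.n = I.n) → J.ratio < I.ratio

/-- `T_I(p)` : the tasks assigned to processor `p` by the LPT schedule. -/
noncomputable def T (p : ℕ) : Finset ℕ := I.tasks.filter (fun i => I.lptA i = p)

/-- `T'_I(p) = T_I(p) \ {n}` : the LPT tasks of `p`, without the last task. -/
noncomputable def T' (p : ℕ) : Finset ℕ := (I.T p).erase I.n

/-- `w'_I(p)` : the workload of `p` in the LPT schedule without the last task. -/
noncomputable def w' (p : ℕ) : ℝ := ∑ i ∈ I.T' p, I.t i

/-- `T*(p)` for a schedule `A` : the tasks assigned to processor `p` by `A`. -/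
noncomputable def Tstar (A : ℕ → ℕ) (p : ℕ) : Finset ℕ :=
  I.tasks.filter (fun i => A i = p)

/-- `w*(p)` for a schedule `A` : the workload of processor `p` under `A`. -/
noncomputable def wstar (A : ℕ → ℕ) (p : ℕ) : ℝ := ∑ i ∈ I.Tstar A p, I.t i

/-- `A` is an optimal schedule whose workloads satisfy `w*(1) ≥ … ≥ w*(m)`. -/
def IsSortedOptimal (A : ℕ → ℕ) : Prop :=
  I.IsSchedule A ∧ I.makespan A = I.opt ∧
    ∀ p q, 1 ≤ p → p ≤ q → q ≤ I.m → I.wstar A q ≤ I.wstar A p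

/-- Processor `p` dominates processor `q` (with respect to the optimal
schedule `A`): `s p ≤ s q` and there is `f : T*(q) → T'(p)` with
`t i ≥ Σ_{f j = i} t j` for every `i ∈ T'(p)`. -/
def Dominates (A : ℕ → ℕ) (p q : ℕ) : Prop :=
  I.s p ≤ I.s q ∧ ∃ f : ℕ → ℕ,
    (∀ j ∈ I.Tstar A q, f j ∈ I.T' p) ∧
    ∀ i ∈ I.T' p, (∑ j ∈ (I.Tstar A q).filter (fun j => f j = i), I.t j) ≤ I.t i

end SchedInstance


namespace SchedInstance

variable (I : SchedInstance)

lemma mem_procs {p : ℕ} : p ∈ I.procs ↔ 1 ≤ p ∧ p ≤ I.m := Finset.mem_Icc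

lemma mem_tasks {i : ℕ} : i ∈ I.tasks ↔ 1 ≤ i ∧ i ≤ I.n := Finset.mem_Icc

lemma s_pos {p : ℕ} (hp : p ∈ I.procs) : 0 < I.s p := by
  rw [mem_procs] at hp; exact I.hs p hp.1 hp.2

lemma t_pos {i : ℕ} (hi : i ∈ I.tasks) : 0 < I.t i := by
  rw [mem_tasks] at hi; exact I.ht i hi.1 hi.2

lemma load_nonneg (A : ℕ → ℕ) (p : ℕ) : 0 ≤ I.load A p :=
  Finset.sum_nonneg fun i hi => (I.t_pos (Finset.mem_filter.mp hi).1).le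

lemma load_le_makespan {A : ℕ → ℕ} {p : ℕ} (hp : p ∈ I.procs) :
    I.load A p / I.s p ≤ I.makespan A :=
  Finset.le_sup' (fun p => I.load A p / I.s p) hp

lemma makespan_nonneg (A : ℕ → ℕ) : 0 ≤ I.makespan A := by
  obtain ⟨p, hp⟩ := I.procs_nonempty
  exact le_trans (div_nonneg (I.load_nonneg A p) (I.s_pos hp).le) (I.load_le_makespan hp)

lemma choose_mem_filter (w : ℕ → ℝ) (i : ℕ) :
    I.choose w i ∈ I.procs.filter
      (fun p => I.cost w i p = I.procs.inf' I.procs_nonempty (I.cost w i)) := by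
  apply Finset.min'_mem

lemma choose_mem_procs (w : ℕ → ℝ) (i : ℕ) : I.choose w i ∈ I.procs :=
  (Finset.mem_filter.mp (I.choose_mem_filter w i)).1

lemma cost_choose (w : ℕ → ℝ) (i : ℕ) :
    I.cost w i (I.choose w i) = I.procs.inf' I.procs_nonempty (I.cost w i) :=
  (Finset.mem_filter.mp (I.choose_mem_filter w i)).2

lemma cost_choose_le {w : ℕ → ℝ} {i p : ℕ} (hp : p ∈ I.procs) :
    I.cost w i (I.choose w i) ≤ I.cost w i p := by
  rw [I.cost_choose]; exact Finset.inf'_le _ hp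

lemma choose_le {w : ℕ → ℝ} {i p : ℕ} (hp : p ∈ I.procs)
    (h : I.cost w i p = I.procs.inf' I.procs_nonempty (I.cost w i)) :
    I.choose w i ≤ p :=
  Finset.min'_le _ _ (Finset.mem_filter.mpr ⟨hp, h⟩)

lemma lptA_mem (i : ℕ) : I.lptA i ∈ I.procs := I.choose_mem_procs _ _

lemma lptA_isSchedule : I.IsSchedule I.lptA := fun i _ => I.lptA_mem i

lemma lptA_succ (k : ℕ) : I.lptA (k + 1) = I.choose (I.lptW k) (k + 1) := rfl

lemma lptW_succ (k p : ℕ) :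
    I.lptW (k + 1) p = I.lptW k p +
      if I.lptA (k + 1) = p ∧ k + 1 ≤ I.n then I.t (k + 1) else 0 := rfl

lemma lptW_zero (p : ℕ) : I.lptW 0 p = 0 := rfl

/-- plateau: if no task in `(a, b]` is assigned to `q`, the LPT workload of `q`
doesn't change. -/
lemma lptW_plateau {a b q : ℕ} (hab : a ≤ b)
    (h : ∀ i, a < i → i ≤ b → i ≤ I.n → I.lptA i ≠ q) :
    I.lptW b q = I.lptW a q := by
  induction b with
  | zero => cases Nat.le_zero.mp hab; rfl
  | succ k ih =>
    rcases Nat.lt_or_ge a (k+1) with hlt | hge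
    · have hk : a ≤ k := Nat.lt_succ_iff.mp hlt
      rw [I.lptW_succ, if_neg, add_zero]
      · exact ih hk fun i h1 h2 h3 => h i h1 (Nat.le_succ_of_le h2) h3
      · rintro ⟨hc, hn⟩
        exact h (k+1) hlt le_rfl hn hc
    · have : a = k + 1 := le_antisymm hab hge
      subst this; rfl

lemma lptW_nonneg (k p : ℕ) : 0 ≤ I.lptW k p := by
  induction k with
  | zero => exact le_rfl
  | succ k ih =>
    rw [I.lptW_succ]
    refine add_nonneg ih ?_
    split
    · next h => exact (I.ht _ (Nat.one_le_iff_ne_zero.mpr (Nat.succ_ne_zero k)) h.2).le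
    · exact le_rfl

lemma lptW_eq_sum (k p : ℕ) :
    I.lptW k p = ∑ i ∈ (Finset.Icc 1 (min k I.n)).filter (fun i => I.lptA i = p), I.t i := by
  induction k with
  | zero => simp [lptW_zero]
  | succ k ih =>
    rcases Nat.lt_or_ge k I.n with hk | hk
    · have h1 : min (k+1) I.n = k + 1 := min_eq_left hk
      have h2 : min k I.n = k := min_eq_left hk.le
      rw [h1] at *
      rw [I.lptW_succ, ih, h2]
      have hins : Finset.Icc 1 (k+1) = insert (k+1) (Finset.Icc 1 k) := by
        exact (Finset.insert_Icc_right_eq_Icc_add_one (by omega)).symm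
      rw [hins, Finset.filter_insert]
      by_cases hc : I.lptA (k+1) = p
      · rw [if_pos ⟨hc, hk⟩, if_pos hc, Finset.sum_insert (by simp), add_comm]
      · rw [if_neg (fun h => hc h.1), if_neg hc, add_zero]
    · have h1 : min (k+1) I.n = I.n := min_eq_right (by omega)
      have h2 : min k I.n = I.n := min_eq_right hk
      rw [I.lptW_succ, ih, h1, h2, if_neg, add_zero]
      rintro ⟨-, hn⟩; omega

lemma load_lptA_eq (p : ℕ) : I.load I.lptA p = I.lptW I.n p := by
  rw [I.lptW_eq_sum, min_self]; rfl

end SchedInstance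
namespace SchedInstance

variable (I : SchedInstance)

def makespanSet : Set ℝ := {r | ∃ A, I.IsSchedule A ∧ I.makespan A = r}

lemma opt_eq : I.opt = sInf I.makespanSet := rfl

lemma makespanSet_nonempty : I.makespanSet.Nonempty :=
  ⟨_, I.lptA, I.lptA_isSchedule, rfl⟩

lemma makespanSet_bddBelow : BddBelow I.makespanSet := by
  refine ⟨0, fun r hr => ?_⟩
  obtain ⟨A, -, rfl⟩ := hr
  exact I.makespan_nonneg A

lemma opt_le_makespan {A : ℕ → ℕ} (hA : I.IsSchedule A) : I.opt ≤ I.makespan A :=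
  csInf_le I.makespanSet_bddBelow ⟨A, hA, rfl⟩

lemma makespan_congr {A B : ℕ → ℕ} (h : ∀ i ∈ I.tasks, A i = B i) :
    I.makespan A = I.makespan B := by
  unfold makespan load
  congr 1; funext p; congr 2
  apply Finset.filter_congr
  intro i hi; simp [h i hi]

lemma makespanSet_finite : I.makespanSet.Finite := by
  classical
  have : I.makespanSet ⊆
      ↑((I.tasks.pi (fun _ => I.procs)).image
        (fun f => I.makespan (fun i => if h : i ∈ I.tasks then f i h else 1))) := by
    rintro r ⟨A, hA, rfl⟩
    simp only [Finset.coe_image, Set.mem_image, Finset.mem_coe, Finset.mem_pi]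
    refine ⟨fun i _ => A i, fun i hi => hA i hi, ?_⟩
    apply I.makespan_congr
    intro i hi; rw [dif_pos hi]
  exact Set.Finite.subset (Finset.finite_toSet _) this

lemma exists_optimal : ∃ A, I.IsSchedule A ∧ I.makespan A = I.opt := by
  have := I.makespanSet_nonempty.csInf_mem I.makespanSet_finite
  obtain ⟨A, hA, h⟩ := this
  exact ⟨A, hA, h⟩

lemma opt_pos : 0 < I.opt := by
  obtain ⟨A, hA, hopt⟩ := I.exists_optimal
  rw [← hopt]
  have h1t : (1 : ℕ) ∈ I.tasks := I.mem_tasks.mpr ⟨le_rfl, I.hn⟩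
  have hA1 : A 1 ∈ I.procs := hA 1 h1t
  have hload : 0 < I.load A (A 1) := by
    have : I.t 1 ≤ I.load A (A 1) := by
      apply Finset.single_le_sum (f := fun i => I.t i)
      · intro i hi; exact (I.t_pos (Finset.mem_filter.mp hi).1).le
      · exact Finset.mem_filter.mpr ⟨h1t, rfl⟩
    exact lt_of_lt_of_le (I.t_pos h1t) this
  exact lt_of_lt_of_le (div_pos hload (I.s_pos hA1)) (I.load_le_makespan hA1)

lemma lptTime_nonneg : 0 ≤ I.lptTime := I.makespan_nonneg _

lemma opt_le_lptTime : I.opt ≤ I.lptTime := I.opt_le_makespan I.lptA_isSchedule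

/-- If `opt J ≤ 1` then `LPT(J) ≤ ρ_J`. -/
lemma lptTime_le_ratio (h : I.opt ≤ 1) : I.lptTime ≤ I.ratio := by
  have := I.opt_pos
  calc I.lptTime = I.lptTime / 1 := (div_one _).symm
    _ ≤ I.lptTime / I.opt := by
        apply div_le_div_of_nonneg_left I.lptTime_nonneg I.opt_pos h

lemma ratio_eq_lptTime (h : I.opt = 1) : I.ratio = I.lptTime := by
  rw [ratio, h, div_one]

lemma one_le_ratio (h : I.opt = 1) : 1 ≤ I.ratio := by
  rw [I.ratio_eq_lptTime h, ← h]; exact I.opt_le_lptTime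

/-- To contradict minimality it is enough to exhibit one smaller instance with
a large ratio. -/
lemma not_minimal_of_witness (J : SchedInstance) (hm : J.m ≤ I.m) (hn : J.n ≤ I.n)
    (hne : ¬(J.m = I.m ∧ J.n = I.n)) (hr : I.ratio ≤ J.ratio) : ¬ I.Minimal :=
  fun hmin => absurd (hmin J hm hn hne) (not_lt.mpr hr)

end SchedInstance
namespace SchedInstance

variable (I : SchedInstance)

lemma one_le_ratio' : 1 ≤ I.ratio :=
  (one_le_div I.opt_pos).mpr I.opt_le_lptTime

/-- The trivial one-processor one-task instance. -/
def trivialInstance : SchedInstance :=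
  ⟨1, 1, fun _ => 1, fun _ => 1, le_rfl, le_rfl, fun _ _ _ => one_pos,
    fun _ _ _ => one_pos, fun _ _ _ _ _ => le_rfl⟩

/-- The prefix instance: same processors, only the tasks `1, …, k`. -/
def prefixAt (k : ℕ) (hk1 : 1 ≤ k) (hkn : k ≤ I.n) : SchedInstance :=
  ⟨I.m, k, I.s, I.t, I.hm, hk1, I.hs, fun i h1 h2 => I.ht i h1 (h2.trans hkn),
    fun i j h1 h2 h3 => I.tsorted i j h1 h2 (h3.trans hkn)⟩

variable {k : ℕ} (hk1 : 1 ≤ k) (hkn : k ≤ I.n)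

lemma prefixAt_procs : (I.prefixAt k hk1 hkn).procs = I.procs := rfl

lemma prefixAt_choose : (I.prefixAt k hk1 hkn).choose = I.choose := rfl

lemma prefixAt_lptW {j : ℕ} (hj : j ≤ k) :
    (I.prefixAt k hk1 hkn).lptW j = I.lptW j := by
  induction j with
  | zero => funext p; rfl
  | succ i ih =>
    have hik : i ≤ k := (Nat.le_succ i).trans hj
    funext p
    show (I.prefixAt k hk1 hkn).lptW i p + _ = I.lptW i p + _
    rw [ih (Nat.le_of_succ_le hj), prefixAt_choose]
    congr 1
    have hc1 : i + 1 ≤ k := hj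
    have hc2 : i + 1 ≤ I.n := hj.trans hkn
    by_cases hc : I.choose (I.lptW i) (i + 1) = p
    · rw [if_pos ⟨hc, hc1⟩, if_pos ⟨hc, hc2⟩]; rfl
    · rw [if_neg (fun h => hc h.1), if_neg (fun h => hc h.1)]

lemma prefixAt_load (p : ℕ) :
    (I.prefixAt k hk1 hkn).load (I.prefixAt k hk1 hkn).lptA p = I.lptW k p := by
  rw [(I.prefixAt k hk1 hkn).load_lptA_eq, show (I.prefixAt k hk1 hkn).n = k from rfl,
    prefixAt_lptW I hk1 hkn le_rfl]

lemma prefixAt_lptTime :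
    (I.prefixAt k hk1 hkn).lptTime =
      I.procs.sup' I.procs_nonempty (fun p => I.lptW k p / I.s p) := by
  unfold lptTime makespan
  apply Finset.sup'_congr _ (I.prefixAt_procs hk1 hkn)
  intro p _
  rw [prefixAt_load]
  rfl

lemma prefixAt_opt_le : (I.prefixAt k hk1 hkn).opt ≤ I.opt := by
  obtain ⟨A, hA, hopt⟩ := I.exists_optimal
  set J := I.prefixAt k hk1 hkn with hJ
  have hAJ : J.IsSchedule A := by
    intro i hi
    exact hA i (I.mem_tasks.mpr (by
      have := (J.mem_tasks).mp hi
      exact ⟨this.1, le_trans this.2 hkn⟩))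
  have hle : J.makespan A ≤ I.makespan A := by
    apply Finset.sup'_le
    intro p hp
    have hpI : p ∈ I.procs := hp
    refine le_trans ?_ (I.load_le_makespan hpI)
    show J.load A p / I.s p ≤ I.load A p / I.s p
    refine (div_le_div_iff_of_pos_right (I.s_pos hpI)).mpr ?_
    refine Finset.sum_le_sum_of_subset_of_nonneg ?_ ?_
    · apply Finset.filter_subset_filter
      intro i hi
      have := Finset.mem_Icc.mp hi
      exact Finset.mem_Icc.mpr ⟨this.1, this.2.trans hkn⟩
    · intro i hi _; exact (I.t_pos (Finset.mem_filter.mp hi).1).le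
  exact le_trans (J.opt_le_makespan hAJ) (le_trans hle (le_of_eq hopt))

end SchedInstance
namespace SchedInstance

variable (I : SchedInstance)

/-- The tasks kept when we delete processor `m` : all tasks except those that
LPT assigns to processor `m` (but always keeping the last task `n`). -/
noncomputable def Kset : Finset ℕ := I.tasks \ I.T' I.m

lemma n_mem_Kset : I.n ∈ I.Kset := by
  rw [Kset, Finset.mem_sdiff]
  exact ⟨I.mem_tasks.mpr ⟨I.hn, le_rfl⟩, Finset.notMem_erase _ _⟩

lemma Kset_card_pos : 1 ≤ I.Kset.card :=
  Finset.card_pos.mpr ⟨I.n, I.n_mem_Kset⟩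

lemma Kset_subset : I.Kset ⊆ I.tasks := Finset.sdiff_subset

lemma kept_lptA {i : ℕ} (hi : i ∈ I.Kset) (hin : i ≠ I.n) : I.lptA i ≠ I.m := by
  rw [Kset, Finset.mem_sdiff] at hi
  intro hA
  exact hi.2 (Finset.mem_erase.mpr ⟨hin, Finset.mem_filter.mpr ⟨hi.1, hA⟩⟩)

lemma dropped_lptA {i : ℕ} (hi : i ∈ I.tasks) (h : i ∉ I.Kset) :
    I.lptA i = I.m ∧ i ≠ I.n := by
  rw [Kset, Finset.mem_sdiff] at h
  push_neg at h
  have := h hi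
  rw [T', Finset.mem_erase, T, Finset.mem_filter] at this
  exact ⟨this.2.2, this.1⟩

noncomputable def kiso : Fin I.Kset.card ≃o {x // x ∈ I.Kset} :=
  I.Kset.orderIsoOfFin rfl

/-- `ψfun j` : the `j`-th smallest kept task (for `1 ≤ j ≤ |K|`). -/
noncomputable def ψfun : ℕ → ℕ := fun j =>
  if h : j - 1 < I.Kset.card then (I.kiso ⟨j - 1, h⟩ : ℕ) else I.n + j

lemma ψ_mem {j : ℕ} (h2 : j ≤ I.Kset.card) (h1 : 1 ≤ j) : I.ψfun j ∈ I.Kset := by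
  rw [ψfun, dif_pos (show j - 1 < I.Kset.card by omega)]
  exact (I.kiso _).2

lemma ψ_mem_tasks {j : ℕ} (h2 : j ≤ I.Kset.card) (h1 : 1 ≤ j) : I.ψfun j ∈ I.tasks :=
  I.Kset_subset (I.ψ_mem h2 h1)

lemma ψ_strictMono {a b : ℕ} (h1 : 1 ≤ a) (hab : a < b) (hb : b ≤ I.Kset.card) :
    I.ψfun a < I.ψfun b := by
  rw [ψfun, ψfun, dif_pos (show a - 1 < I.Kset.card by omega),
    dif_pos (show b - 1 < I.Kset.card by omega)]
  have : (⟨a - 1, by omega⟩ : Fin I.Kset.card) < ⟨b - 1, by omega⟩ := by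
    simp [Fin.mk_lt_mk]; omega
  exact_mod_cast I.kiso.strictMono this

lemma ψ_mono {a b : ℕ} (h1 : 1 ≤ a) (hab : a ≤ b) (hb : b ≤ I.Kset.card) :
    I.ψfun a ≤ I.ψfun b := by
  rcases eq_or_lt_of_le hab with rfl | h
  · exact le_rfl
  · exact (I.ψ_strictMono h1 h hb).le

lemma ψ_surj {i : ℕ} (hi : i ∈ I.Kset) :
    ∃ j, 1 ≤ j ∧ j ≤ I.Kset.card ∧ I.ψfun j = i := by
  obtain ⟨jf, hjf⟩ := I.kiso.surjective ⟨i, hi⟩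
  refine ⟨jf.val + 1, by omega, by omega, ?_⟩
  rw [ψfun, dif_pos (show jf.val + 1 - 1 < I.Kset.card by omega)]
  have : (⟨jf.val + 1 - 1, by omega⟩ : Fin I.Kset.card) = jf := by
    apply Fin.ext; simp
  rw [this, hjf]

lemma ψ_last : I.ψfun I.Kset.card = I.n := by
  have h1 := I.Kset_card_pos
  have hmem := I.ψ_mem_tasks le_rfl h1
  have hle : I.ψfun I.Kset.card ≤ I.n := (I.mem_tasks.mp hmem).2
  obtain ⟨j, hj1, hj2, hj3⟩ := I.ψ_surj I.n_mem_Kset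
  have := I.ψ_mono hj1 hj2 le_rfl
  omega

/-- `σfun j` : the index of the last task of `I` processed when `J` has
processed its first `j` tasks. -/
noncomputable def σfun : ℕ → ℕ := fun j => if j = 0 then 0 else I.ψfun j

lemma gap {j i : ℕ} (hj : j + 1 ≤ I.Kset.card) (h1 : I.σfun j < i)
    (h2 : i < I.ψfun (j + 1)) : i ∉ I.Kset := by
  intro hi
  obtain ⟨j', h1', h2', rfl⟩ := I.ψ_surj hi
  have hlt : j' < j + 1 := by
    by_contra h
    exact absurd (I.ψ_mono (by omega) (by omega : j + 1 ≤ j') h2') (by omega)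
  have hgt : j < j' := by
    rcases Nat.eq_zero_or_pos j with rfl | hpos
    · omega
    · rw [σfun, if_neg (by omega)] at h1
      by_contra h
      exact absurd (I.ψ_mono h1' (by omega : j' ≤ j) (by omega)) (by omega)
  omega

lemma σ_le_ψ_sub_one {j : ℕ} (hj : j + 1 ≤ I.Kset.card) :
    I.σfun j ≤ I.ψfun (j + 1) - 1 := by
  rcases Nat.eq_zero_or_pos j with rfl | hpos
  · rw [σfun]; simp
  · rw [σfun, if_neg (by omega)]
    have := I.ψ_strictMono hpos (by omega : j < j + 1) hj
    omega

/-- The instance obtained from `I` by deleting processor `m` and the tasks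
that LPT assigns to processor `m` (except the last task `n`). -/
noncomputable def removeTop (hm2 : 2 ≤ I.m) : SchedInstance where
  m := I.m - 1
  n := I.Kset.card
  s := I.s
  t := fun j => if 1 ≤ j ∧ j ≤ I.Kset.card then I.t (I.ψfun j) else 1
  hm := by omega
  hn := I.Kset_card_pos
  hs := fun p h1 h2 => I.hs p h1 (by omega)
  ht := by
    intro i h1 h2
    show 0 < if 1 ≤ i ∧ i ≤ I.Kset.card then I.t (I.ψfun i) else 1
    rw [if_pos ⟨h1, h2⟩]
    exact I.t_pos (I.ψ_mem_tasks h2 h1)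
  tsorted := by
    intro i j h1 h3 h2
    show (if 1 ≤ j ∧ j ≤ I.Kset.card then I.t (I.ψfun j) else 1) ≤
      (if 1 ≤ i ∧ i ≤ I.Kset.card then I.t (I.ψfun i) else 1)
    rw [if_pos ⟨le_trans h1 h3, h2⟩, if_pos ⟨h1, le_trans h3 h2⟩]
    have hmi := I.mem_tasks.mp (I.ψ_mem_tasks (le_trans h3 h2) h1)
    have hmj := I.mem_tasks.mp (I.ψ_mem_tasks h2 (le_trans h1 h3))
    exact I.tsorted _ _ hmi.1 (I.ψ_mono h1 h3 h2) hmj.2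

variable (hm2 : 2 ≤ I.m)

lemma removeTop_m : (I.removeTop hm2).m = I.m - 1 := rfl

lemma removeTop_procs_subset : (I.removeTop hm2).procs ⊆ I.procs := by
  show Finset.Icc 1 (I.m - 1) ⊆ Finset.Icc 1 I.m
  apply Finset.Icc_subset_Icc le_rfl
  omega

lemma removeTop_t {j : ℕ} (h1 : 1 ≤ j) (h2 : j ≤ I.Kset.card) :
    (I.removeTop hm2).t j = I.t (I.ψfun j) := if_pos ⟨h1, h2⟩

lemma removeTop_cost_agree {w w' : ℕ → ℝ} {i i' : ℕ}
    (ht : (I.removeTop hm2).t i' = I.t i)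
    (hw : ∀ q ∈ (I.removeTop hm2).procs, w' q = w q) :
    ∀ q ∈ (I.removeTop hm2).procs, (I.removeTop hm2).cost w' i' q = I.cost w i q := by
  intro q hq
  rw [cost, cost, ht, hw q hq]
  rfl

lemma removeTop_inf_ge {w w' : ℕ → ℝ} {i i' : ℕ}
    (ht : (I.removeTop hm2).t i' = I.t i)
    (hw : ∀ q ∈ (I.removeTop hm2).procs, w' q = w q) :
    I.procs.inf' I.procs_nonempty (I.cost w i) ≤
      (I.removeTop hm2).procs.inf' (I.removeTop hm2).procs_nonempty
        ((I.removeTop hm2).cost w' i') := by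
  apply Finset.le_inf'
  intro q hq
  rw [I.removeTop_cost_agree hm2 ht hw q hq]
  exact Finset.inf'_le _ (I.removeTop_procs_subset hm2 hq)

lemma removeTop_choose_cost_ge {w w' : ℕ → ℝ} {i i' : ℕ}
    (ht : (I.removeTop hm2).t i' = I.t i)
    (hw : ∀ q ∈ (I.removeTop hm2).procs, w' q = w q) :
    I.cost w i (I.choose w i) ≤
      (I.removeTop hm2).cost w' i' ((I.removeTop hm2).choose w' i') := by
  rw [I.cost_choose, (I.removeTop hm2).cost_choose]
  exact I.removeTop_inf_ge hm2 ht hw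

lemma removeTop_choose_agree {w w' : ℕ → ℝ} {i i' : ℕ}
    (ht : (I.removeTop hm2).t i' = I.t i)
    (hw : ∀ q ∈ (I.removeTop hm2).procs, w' q = w q)
    (hne : I.choose w i ≠ I.m) :
    (I.removeTop hm2).choose w' i' = I.choose w i := by
  set J := I.removeTop hm2 with hJdef
  set c := I.choose w i with hc
  have hcI : c ∈ I.procs := I.choose_mem_procs w i
  have hcJ : c ∈ J.procs := by
    rw [mem_procs] at hcI ⊢
    have : J.m = I.m - 1 := rfl
    omega
  have hcost := I.removeTop_cost_agree hm2 ht hw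
  have hinf : J.procs.inf' J.procs_nonempty (J.cost w' i') =
      I.procs.inf' I.procs_nonempty (I.cost w i) := by
    apply le_antisymm
    · rw [← I.cost_choose w i]
      calc J.procs.inf' J.procs_nonempty (J.cost w' i') ≤ J.cost w' i' c :=
            Finset.inf'_le _ hcJ
        _ = I.cost w i c := hcost c hcJ
    · exact I.removeTop_inf_ge hm2 ht hw
  -- c belongs to the J-filter
  have hcF : c ∈ J.procs.filter
      (fun p => J.cost w' i' p = J.procs.inf' J.procs_nonempty (J.cost w' i')) := by
    refine Finset.mem_filter.mpr ⟨hcJ, ?_⟩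
    rw [hinf, hcost c hcJ, I.cost_choose]
  apply le_antisymm
  · exact Finset.min'_le _ _ hcF
  · -- every member of the J-filter is a member of the I-filter
    apply Finset.le_min'
    intro y hy
    rw [Finset.mem_filter] at hy
    apply I.choose_le (I.removeTop_procs_subset hm2 hy.1)
    rw [← hcost y hy.1, hy.2, hinf]

end SchedInstance
namespace SchedInstance

variable (I : SchedInstance) (hm2 : 2 ≤ I.m)

lemma removeTop_n : (I.removeTop hm2).n = I.Kset.card := rfl

lemma removeTop_s : (I.removeTop hm2).s = I.s := rfl

lemma removeTop_mem_procs {q : ℕ} (hq : q ∈ I.procs) (hqm : q ≠ I.m) :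
    q ∈ (I.removeTop hm2).procs := by
  rw [mem_procs] at hq ⊢
  rw [removeTop_m]
  omega

lemma removeTop_not_m {q : ℕ} (hq : q ∈ (I.removeTop hm2).procs) : q ≠ I.m := by
  rw [mem_procs, removeTop_m] at hq
  omega

/-- The simulation invariant: after processing `j` tasks, the LPT workloads of
the reduced instance agree with those of `I` after it has processed the first
`σ j` tasks. -/
lemma removeTop_sim :
    ∀ j, j ≤ I.Kset.card → (j = I.Kset.card → I.lptA I.n ≠ I.m) →
      ∀ q ∈ (I.removeTop hm2).procs,
        (I.removeTop hm2).lptW j q = I.lptW (I.σfun j) q := by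
  set J := I.removeTop hm2 with hJdef
  intro j
  induction j with
  | zero => intro _ _ q _; rw [σfun, if_pos rfl]; rfl
  | succ j ih =>
    intro hj hlast q hq
    have hjc : j ≤ I.Kset.card := by omega
    have hjne : j ≠ I.Kset.card := by omega
    have ihq := ih hjc (fun h => absurd h hjne)
    set b := I.ψfun (j + 1) with hbdef
    have hbK : b ∈ I.Kset := I.ψ_mem hj (by omega)
    have hbt := I.mem_tasks.mp (I.Kset_subset hbK)
    have hσle := I.σ_le_ψ_sub_one hj
    -- the workloads of I do not change on processors ≠ m between σ j and b - 1
    have hplat : ∀ r ∈ J.procs, I.lptW (b - 1) r = I.lptW (I.σfun j) r := by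
      intro r hr
      apply I.lptW_plateau hσle
      intro i hi1 hi2 hi3 hAi
      have hiK : i ∉ I.Kset := I.gap hj hi1 (by omega)
      have := (I.dropped_lptA (I.mem_tasks.mpr ⟨by omega, hi3⟩) hiK).1
      exact I.removeTop_not_m hm2 hr (hAi.symm.trans this)
    have hw : ∀ r ∈ J.procs, J.lptW j r = I.lptW (b - 1) r := by
      intro r hr
      rw [hplat r hr, ihq r hr]
    have ht : J.t (j + 1) = I.t b := I.removeTop_t hm2 (by omega) hj
    -- the chosen processor of I at step b is not m
    have hbA : I.lptA b ≠ I.m := by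
      by_cases hbn : b = I.n
      · have : j + 1 = I.Kset.card := by
          by_contra hne
          have := I.ψ_strictMono (by omega) (show j + 1 < I.Kset.card by omega) le_rfl
          rw [I.ψ_last] at this
          omega
        exact hbn ▸ hlast this
      · exact I.kept_lptA hbK hbn
    have hb1 : b - 1 + 1 = b := by omega
    have hlAb : I.lptA b = I.choose (I.lptW (b - 1)) b := rfl
    have hchoose : J.choose (J.lptW j) (j + 1) = I.choose (I.lptW (b - 1)) b := by
      apply I.removeTop_choose_agree hm2 ht hw
      rw [← hlAb]
      exact hbA
    have hJn : J.n = I.Kset.card := rfl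
    have hstep : J.lptW (j + 1) q = J.lptW j q +
        if I.choose (I.lptW (b - 1)) b = q ∧ j + 1 ≤ I.Kset.card
          then I.t b else 0 := by
      rw [J.lptW_succ, J.lptA_succ, hchoose, ht, hJn]
    have hstepI : I.lptW b q = I.lptW (b - 1) q +
        if I.choose (I.lptW (b - 1)) b = q ∧ b ≤ I.n then I.t b else 0 := by
      conv_lhs => rw [← hb1]
      rw [I.lptW_succ, I.lptA_succ, hb1]
    have hσ : I.σfun (j + 1) = b := by rw [σfun, if_neg (by omega)]
    rw [hstep, hσ, hstepI, hw q hq]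
    congr 1
    by_cases hc : I.choose (I.lptW (b - 1)) b = q
    · rw [if_pos ⟨hc, hj⟩, if_pos ⟨hc, hbt.2⟩]
    · rw [if_neg (fun h => hc h.1), if_neg (fun h => hc h.1)]

/-- When the last task does not go to processor `m`, the reduced instance ends
with exactly the workloads of `I` (on the surviving processors). -/
lemma removeTop_load_eq (hAn : I.lptA I.n ≠ I.m) :
    ∀ q ∈ (I.removeTop hm2).procs,
      (I.removeTop hm2).load (I.removeTop hm2).lptA q = I.lptW I.n q := by
  intro q hq
  rw [(I.removeTop hm2).load_lptA_eq]
  rw [I.removeTop_n hm2]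
  rw [I.removeTop_sim hm2 I.Kset.card le_rfl (fun _ => hAn) q hq,
    σfun, if_neg (by have := I.Kset_card_pos; omega), I.ψ_last]

/-- When the last task goes to processor `m`, the LPT makespan of the reduced
instance is at least that of `I`. -/
lemma removeTop_lptTime_ge (hAn : I.lptA I.n = I.m) :
    I.lptTime ≤ (I.removeTop hm2).lptTime := by
  set J := I.removeTop hm2 with hJdef
  have hIn := I.hn
  have hcard := I.Kset_card_pos
  have hc1 : I.Kset.card - 1 + 1 = I.Kset.card := by omega
  have hn1 : I.n - 1 + 1 = I.n := by omega
  -- workloads before the last step agree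
  have hnecard : I.Kset.card - 1 ≠ I.Kset.card := by omega
  have hsim := I.removeTop_sim hm2 (I.Kset.card - 1) (by omega)
    (fun h => absurd h hnecard)
  have hw : ∀ r ∈ J.procs, J.lptW (I.Kset.card - 1) r = I.lptW (I.n - 1) r := by
    intro r hr
    rw [hsim r hr]
    symm
    refine I.lptW_plateau ?_ ?_
    · have := I.σ_le_ψ_sub_one (j := I.Kset.card - 1) (by omega)
      rw [hc1, I.ψ_last] at this
      exact this
    · intro i hi1 hi2 hi3 hAi
      have hiK : i ∉ I.Kset := by
        refine I.gap (j := I.Kset.card - 1) (by omega) hi1 ?_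
        rw [hc1, I.ψ_last]
        have := I.hn
        omega
      have hd := (I.dropped_lptA (I.mem_tasks.mpr ⟨by omega, hi3⟩) hiK).1
      exact I.removeTop_not_m hm2 hr (hAi.symm.trans hd)
  have ht : J.t I.Kset.card = I.t I.n := by
    rw [I.removeTop_t hm2 hcard le_rfl, I.ψ_last]
  set c' := J.choose (J.lptW (I.Kset.card - 1)) I.Kset.card with hc'def
  have hc'mem : c' ∈ J.procs := J.choose_mem_procs _ _
  -- J's final workload of c'
  have hJstep : J.lptW I.Kset.card c' = J.lptW (I.Kset.card - 1) c' + J.t I.Kset.card := by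
    conv_lhs => rw [← hc1]
    rw [J.lptW_succ, J.lptA_succ, hc1, if_pos ⟨rfl, le_rfl⟩]
  -- I's final workload of m
  have hIstep : I.lptW I.n I.m = I.lptW (I.n - 1) I.m + I.t I.n := by
    conv_lhs => rw [← hn1]
    rw [I.lptW_succ, I.lptA_succ, hn1, if_pos ⟨hAn, le_rfl⟩]
  rw [lptTime, makespan]
  apply Finset.sup'_le
  intro q hq
  rw [I.load_lptA_eq]
  by_cases hqm : q = I.m
  · -- the processor m term: bounded by the cost of J's last step
    subst hqm
    have hcost : I.cost (I.lptW (I.n - 1)) I.n (I.choose (I.lptW (I.n - 1)) I.n) ≤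
        J.cost (J.lptW (I.Kset.card - 1)) I.Kset.card c' :=
      I.removeTop_choose_cost_ge hm2 ht hw
    have hch : I.choose (I.lptW (I.n - 1)) I.n = I.m := hAn
    rw [hch] at hcost
    have hIc : I.cost (I.lptW (I.n - 1)) I.n I.m = I.lptW I.n I.m / I.s I.m := by
      rw [cost, hIstep]
    have hJc : J.cost (J.lptW (I.Kset.card - 1)) I.Kset.card c' =
        J.lptW I.Kset.card c' / J.s c' := by
      rw [cost, hJstep]
    calc I.lptW I.n I.m / I.s I.m = I.cost (I.lptW (I.n - 1)) I.n I.m := hIc.symm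
      _ ≤ J.cost (J.lptW (I.Kset.card - 1)) I.Kset.card c' := hcost
      _ = J.lptW I.Kset.card c' / J.s c' := hJc
      _ = J.load J.lptA c' / J.s c' := by rw [J.load_lptA_eq]; rfl
      _ ≤ J.lptTime := J.load_le_makespan hc'mem
  · -- other processors: their final I-workload is at most their final J-workload
    have hqJ : q ∈ J.procs := I.removeTop_mem_procs hm2 hq hqm
    have hIW : I.lptW I.n q = I.lptW (I.n - 1) q := by
      conv_lhs => rw [← hn1]
      rw [I.lptW_succ, I.lptA_succ, hn1,
        if_neg (fun h => hqm (h.1.symm.trans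
          (hAn : I.choose (I.lptW (I.n - 1)) I.n = I.m))), add_zero]
    have hJW : I.lptW (I.n - 1) q ≤ J.lptW I.Kset.card q := by
      conv_rhs => rw [← hc1]
      rw [J.lptW_succ, ← hw q hqJ]
      have : (0 : ℝ) ≤ if J.lptA (I.Kset.card - 1 + 1) = q ∧ I.Kset.card - 1 + 1 ≤ J.n
          then J.t (I.Kset.card - 1 + 1) else 0 := by
        split
        · next h => exact (J.t_pos (J.mem_tasks.mpr ⟨by omega, h.2⟩)).le
        · exact le_rfl
      linarith [hw q hqJ]
    calc I.lptW I.n q / I.s q = I.lptW (I.n - 1) q / I.s q := by rw [hIW]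
      _ ≤ J.lptW I.Kset.card q / J.s q := by
          have hsq : J.s q = I.s q := rfl
          rw [hsq]
          exact (div_le_div_iff_of_pos_right (I.s_pos hq)).mpr hJW
      _ = J.load J.lptA q / J.s q := by rw [J.load_lptA_eq]; rfl
      _ ≤ J.lptTime := J.load_le_makespan hqJ

end SchedInstance
namespace SchedInstance

variable (I : SchedInstance) (hm2 : 2 ≤ I.m)

lemma Kset_card_le : I.Kset.card ≤ I.n := by
  have := Finset.card_le_card I.Kset_subset
  rwa [tasks, Nat.card_Icc, Nat.add_sub_cancel] at this

/-- Deleting processor `m` (together with the discarded tasks) keeps the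
optimum at most `1`, provided some schedule of makespan at most 1 leaves a
processor empty. -/
lemma removeTop_opt_le
    (hsort : ∀ p q, 1 ≤ p → p ≤ q → q ≤ I.m → I.s q ≤ I.s p)
    {A : ℕ → ℕ} (hA : I.IsSchedule A) (hmak : I.makespan A ≤ 1)
    {ph : ℕ} (hph : ph ∈ I.procs) (hAvoid : ∀ i ∈ I.tasks, A i ≠ ph) :
    (I.removeTop hm2).opt ≤ 1 := by
  classical
  set J := I.removeTop hm2 with hJdef
  have hph' := I.mem_procs.mp hph
  have hload : ∀ q ∈ I.procs, I.load A q ≤ I.s q := by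
    intro q hq
    exact (div_le_one (I.s_pos hq)).mp (le_trans (I.load_le_makespan hq) hmak)
  set A' : ℕ → ℕ := fun j =>
    if A (I.ψfun j) < ph then A (I.ψfun j) else A (I.ψfun j) - 1 with hA'def
  set φ : ℕ → ℕ := fun r => if r < ph then r else r + 1 with hφdef
  have hJm : J.m = I.m - 1 := rfl
  have hA'mem : J.IsSchedule A' := by
    intro j hj
    obtain ⟨h1, h2⟩ := J.mem_tasks.mp hj
    have hψ := I.ψ_mem_tasks h2 h1
    have hAψ := I.mem_procs.mp (hA _ hψ)
    have hne := hAvoid _ hψ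
    rw [J.mem_procs, hJm]
    simp only [hA'def]
    split_ifs <;> omega
  have hsum : ∀ r, J.load A' r =
      ∑ i ∈ I.Kset.filter (fun i => (if A i < ph then A i else A i - 1) = r), I.t i := by
    intro r
    rw [load]
    refine Finset.sum_bij (fun j hj => I.ψfun j) ?_ ?_ ?_ ?_
    · intro a ha
      rw [Finset.mem_filter] at ha ⊢
      obtain ⟨h1, h2⟩ := J.mem_tasks.mp ha.1
      refine ⟨I.ψ_mem h2 h1, ?_⟩
      have := ha.2
      simp only [hA'def] at this
      exact this
    · intro a ha b hb hab
      obtain ⟨ha1, ha2⟩ := J.mem_tasks.mp (Finset.mem_filter.mp ha).1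
      obtain ⟨hb1, hb2⟩ := J.mem_tasks.mp (Finset.mem_filter.mp hb).1
      by_contra hne
      rcases Nat.lt_or_ge a b with h | h
      · exact absurd hab (Nat.ne_of_lt (I.ψ_strictMono ha1 h hb2))
      · have : b < a := by omega
        exact absurd hab.symm (Nat.ne_of_lt (I.ψ_strictMono hb1 this ha2))
    · intro i hi
      rw [Finset.mem_filter] at hi
      obtain ⟨j, hj1, hj2, rfl⟩ := I.ψ_surj hi.1
      refine ⟨j, Finset.mem_filter.mpr ⟨J.mem_tasks.mpr ⟨hj1, hj2⟩, ?_⟩, rfl⟩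
      simp only [hA'def]
      exact hi.2
    · intro a ha
      obtain ⟨h1, h2⟩ := J.mem_tasks.mp (Finset.mem_filter.mp ha).1
      exact I.removeTop_t hm2 h1 h2
  have hsub : ∀ r ∈ J.procs,
      I.Kset.filter (fun i => (if A i < ph then A i else A i - 1) = r) ⊆
        I.tasks.filter (fun i => A i = φ r) := by
    intro r hr
    intro i hi
    rw [Finset.mem_filter] at hi ⊢
    have hit := I.Kset_subset hi.1
    have hAi := I.mem_procs.mp (hA _ hit)
    have hne := hAvoid _ hit
    refine ⟨hit, ?_⟩
    have hcond := hi.2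
    simp only [hφdef]
    split_ifs at hcond ⊢ <;> omega
  have hφmem : ∀ r ∈ J.procs, φ r ∈ I.procs ∧ r ≤ φ r := by
    intro r hr
    have := J.mem_procs.mp hr
    rw [hJm] at this
    rw [I.mem_procs]
    simp only [hφdef]
    split_ifs <;> omega
  have hmakJ : J.makespan A' ≤ 1 := by
    apply Finset.sup'_le
    intro r hr
    have hrI : r ∈ I.procs := I.removeTop_procs_subset hm2 hr
    have hsr : J.s r = I.s r := rfl
    rw [hsr, div_le_one (I.s_pos hrI)]
    obtain ⟨hφ1, hφ2⟩ := hφmem r hr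
    calc J.load A' r ≤ I.load A (φ r) := by
          rw [hsum]
          refine Finset.sum_le_sum_of_subset_of_nonneg (hsub r hr) ?_
          intro i hi _
          exact (I.t_pos (Finset.mem_filter.mp hi).1).le
      _ ≤ I.s (φ r) := hload _ hφ1
      _ ≤ I.s r := hsort r (φ r) (J.mem_procs.mp hr).1 hφ2 (I.mem_procs.mp hφ1).2
  exact le_trans (J.opt_le_makespan hA'mem) hmakJ

end SchedInstance
namespace SchedInstance

variable (I : SchedInstance)

lemma load_eq_T_sum : I.load I.lptA I.m = ∑ i ∈ I.T I.m, I.t i := rfl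

/-- Part (i): if some optimal schedule leaves a processor empty, `I` is not
minimal. -/
lemma not_minimal_of_empty_opt (hnorm : I.Normalized)
    (h : ∃ A, I.IsSchedule A ∧ I.makespan A = I.opt ∧
      ∃ p, 1 ≤ p ∧ p ≤ I.m ∧ I.Tstar A p = ∅) :
    ¬ I.Minimal := by
  classical
  obtain ⟨hopt1, hsort, htn⟩ := hnorm
  obtain ⟨A, hA, hAopt, p, hp1, hpm, hTp⟩ := h
  have hm2 : 2 ≤ I.m := by
    by_contra h'
    have hm1 : I.m = 1 := by have := I.hm; omega
    have h1t : (1 : ℕ) ∈ I.tasks := I.mem_tasks.mpr ⟨le_rfl, I.hn⟩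
    have hA1 := I.mem_procs.mp (hA 1 h1t)
    have hA1' : A 1 = p := by omega
    have : (1 : ℕ) ∈ I.Tstar A p := Finset.mem_filter.mpr ⟨h1t, hA1'⟩
    rw [hTp] at this
    exact absurd this (Finset.notMem_empty 1)
  have hAvoid : ∀ i ∈ I.tasks, A i ≠ p := by
    intro i hi heq
    have : i ∈ I.Tstar A p := Finset.mem_filter.mpr ⟨hi, heq⟩
    rw [hTp] at this
    exact absurd this (Finset.notMem_empty i)
  set J := I.removeTop hm2 with hJdef
  have hJopt : J.opt ≤ 1 :=
    I.removeTop_opt_le hm2 hsort hA (le_of_eq (hAopt.trans hopt1))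
      (I.mem_procs.mpr ⟨hp1, hpm⟩) hAvoid
  have hmI : I.m ∈ I.procs := I.mem_procs.mpr ⟨by omega, le_rfl⟩
  have hJwitness : I.lptTime ≤ J.lptTime → ¬ I.Minimal := by
    intro hle
    refine I.not_minimal_of_witness J ?_ ?_ ?_ ?_
    · rw [hJdef, removeTop_m]; omega
    · rw [hJdef, removeTop_n]; exact I.Kset_card_le
    · rintro ⟨hmm, -⟩
      rw [hJdef, removeTop_m] at hmm
      omega
    · rw [I.ratio_eq_lptTime hopt1]
      exact le_trans hle (J.lptTime_le_ratio hJopt)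
  by_cases hcase : I.lptA I.n = I.m
  · exact hJwitness (I.removeTop_lptTime_ge hm2 hcase)
  · by_cases hcase2 : ∃ q0 ∈ J.procs, I.lptW I.n I.m / I.s I.m ≤ I.lptW I.n q0 / I.s q0
    · obtain ⟨q0, hq0, hq0le⟩ := hcase2
      apply hJwitness
      rw [lptTime, makespan]
      apply Finset.sup'_le
      intro q hq
      rw [I.load_lptA_eq]
      by_cases hqm : q = I.m
      · rw [hqm]
        calc I.lptW I.n I.m / I.s I.m ≤ I.lptW I.n q0 / I.s q0 := hq0le
          _ = J.load J.lptA q0 / J.s q0 := by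
              rw [I.removeTop_load_eq hm2 hcase q0 hq0]; rfl
          _ ≤ J.lptTime := J.load_le_makespan hq0
      · have hqJ : q ∈ J.procs := I.removeTop_mem_procs hm2 hq hqm
        calc I.lptW I.n q / I.s q = J.load J.lptA q / J.s q := by
              rw [I.removeTop_load_eq hm2 hcase q hqJ]; rfl
          _ ≤ J.lptTime := J.load_le_makespan hqJ
    · push_neg at hcase2
      have h1J : (1 : ℕ) ∈ J.procs := by
        rw [J.mem_procs, hJdef, removeTop_m]
        omega
      have hWm_pos : 0 < I.lptW I.n I.m / I.s I.m :=
        lt_of_le_of_lt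
          (div_nonneg (I.lptW_nonneg _ _)
            (I.s_pos (I.mem_procs.mpr ⟨le_rfl, I.hm⟩)).le)
          (hcase2 1 h1J)
      have hWm : 0 < I.lptW I.n I.m := by
        by_contra hc
        push_neg at hc
        have : I.lptW I.n I.m / I.s I.m ≤ 0 :=
          div_nonpos_iff.mpr (Or.inr ⟨hc, (I.s_pos hmI).le⟩)
        linarith
      have hTm : (I.T I.m).Nonempty := by
        rw [Finset.nonempty_iff_ne_empty]
        intro h
        have h0 : I.load I.lptA I.m = 0 := by
          rw [I.load_eq_T_sum, h, Finset.sum_empty]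
        rw [I.load_lptA_eq] at h0
        linarith
      set k := (I.T I.m).max' hTm with hkdef
      have hkT : k ∈ I.T I.m := Finset.max'_mem _ _
      have hkt : k ∈ I.tasks := (Finset.mem_filter.mp hkT).1
      have hkA : I.lptA k = I.m := (Finset.mem_filter.mp hkT).2
      obtain ⟨hk1, hkle⟩ := I.mem_tasks.mp hkt
      have hkn : k ≠ I.n := fun h => hcase (h ▸ hkA)
      set J1 := I.prefixAt k hk1 hkle with hJ1def
      have hWmk : I.lptW I.n I.m = I.lptW k I.m := by
        apply I.lptW_plateau hkle
        intro i hi1 hi2 hi3 hAi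
        have : i ∈ I.T I.m :=
          Finset.mem_filter.mpr ⟨I.mem_tasks.mpr ⟨by omega, hi3⟩, hAi⟩
        exact absurd (Finset.le_max' _ _ this) (by omega)
      have hJ1time : I.lptW I.n I.m / I.s I.m ≤ J1.lptTime := by
        rw [I.prefixAt_lptTime hk1 hkle, hWmk]
        exact Finset.le_sup' (fun q => I.lptW k q / I.s q) hmI
      have hItime : I.lptTime ≤ I.lptW I.n I.m / I.s I.m := by
        rw [lptTime, makespan]
        apply Finset.sup'_le
        intro q hq
        rw [I.load_lptA_eq]
        by_cases hqm : q = I.m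
        · subst hqm; exact le_rfl
        · exact (hcase2 q (I.removeTop_mem_procs hm2 hq hqm)).le
      have hJ1opt : J1.opt ≤ 1 := by
        rw [← hopt1]
        exact I.prefixAt_opt_le hk1 hkle
      refine I.not_minimal_of_witness J1 le_rfl hkle ?_ ?_
      · rintro ⟨-, hnn⟩
        have : J1.n = k := rfl
        omega
      · rw [I.ratio_eq_lptTime hopt1]
        exact le_trans hItime (le_trans hJ1time (J1.lptTime_le_ratio hJ1opt))

end SchedInstance
namespace SchedInstance

variable (I : SchedInstance)

/-- For a single-task instance, LPT is optimal. -/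
lemma ratio_eq_one_of_n_one (hsort : ∀ p q, 1 ≤ p → p ≤ q → q ≤ I.m → I.s q ≤ I.s p)
    (hn1 : I.n = 1) : I.ratio = 1 := by
  classical
  have h1p : (1 : ℕ) ∈ I.procs := I.mem_procs.mpr ⟨le_rfl, I.hm⟩
  have h1t : (1 : ℕ) ∈ I.tasks := I.mem_tasks.mpr ⟨le_rfl, I.hn⟩
  have ht1 : 0 < I.t 1 := I.t_pos h1t
  -- the LPT makespan is t 1 / s 1
  have hA1 : I.lptA 1 = 1 := by
    have hc1 : I.cost (I.lptW 0) 1 1 =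
        I.procs.inf' I.procs_nonempty (I.cost (I.lptW 0) 1) := by
      apply le_antisymm ?_ (Finset.inf'_le _ h1p)
      apply Finset.le_inf'
      intro q hq
      rw [cost, cost, I.lptW_zero, I.lptW_zero, zero_add]
      apply div_le_div_of_nonneg_left ht1.le (I.s_pos hq)
      exact hsort 1 q le_rfl (I.mem_procs.mp hq).1 (I.mem_procs.mp hq).2
    have hle := I.choose_le h1p hc1
    have hmem := I.mem_procs.mp (I.choose_mem_procs (I.lptW 0) 1)
    show I.choose (I.lptW 0) 1 = 1
    omega
  have hload : ∀ q, I.load I.lptA q = if q = 1 then I.t 1 else 0 := by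
    intro q
    rw [load, tasks, hn1, Finset.Icc_self, Finset.filter_singleton]
    by_cases hq : q = 1
    · rw [if_pos (by rw [hA1, hq]), if_pos hq, Finset.sum_singleton]
    · rw [if_neg (by rw [hA1]; exact fun h => hq h.symm), if_neg hq, Finset.sum_empty]
  have hlpt : I.lptTime = I.t 1 / I.s 1 := by
    apply le_antisymm
    · rw [lptTime, makespan]
      apply Finset.sup'_le
      intro q hq
      rw [hload]
      by_cases hq1 : q = 1
      · rw [if_pos hq1, hq1]
      · rw [if_neg hq1, zero_div]
        exact div_nonneg ht1.le (I.s_pos h1p).le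
    · have := I.load_le_makespan (A := I.lptA) h1p
      rw [hload, if_pos rfl] at this
      exact this
  -- every schedule has makespan at least t 1 / s 1
  have hopt_ge : I.lptTime ≤ I.opt := by
    apply le_csInf I.makespanSet_nonempty
    rintro r ⟨A, hA, rfl⟩
    have hA1p := hA 1 h1t
    have hA1p' := I.mem_procs.mp hA1p
    have hload1 : I.t 1 ≤ I.load A (A 1) := by
      apply Finset.single_le_sum (f := fun i => I.t i)
      · intro i hi; exact (I.t_pos (Finset.mem_filter.mp hi).1).le
      · exact Finset.mem_filter.mpr ⟨h1t, rfl⟩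
    calc I.lptTime = I.t 1 / I.s 1 := hlpt
      _ ≤ I.t 1 / I.s (A 1) :=
          div_le_div_of_nonneg_left ht1.le (I.s_pos hA1p)
            (hsort 1 (A 1) le_rfl hA1p'.1 hA1p'.2)
      _ ≤ I.load A (A 1) / I.s (A 1) :=
          (div_le_div_iff_of_pos_right (I.s_pos hA1p)).mpr hload1
      _ ≤ I.makespan A := I.load_le_makespan hA1p
  have : I.lptTime = I.opt := le_antisymm hopt_ge I.opt_le_lptTime
  rw [ratio, this, div_self (ne_of_gt I.opt_pos)]

/-- Part (ii). -/
lemma part2 (hnorm : I.Normalized) (h : ∃ p, 1 ≤ p ∧ p ≤ I.m ∧ I.T' p = ∅) :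
    ¬ I.Minimal ∨ I.ratio = 1 := by
  classical
  obtain ⟨hopt1, hsort, htn⟩ := hnorm
  obtain ⟨p, hp1, hpm, hTp⟩ := h
  have hpmem : p ∈ I.procs := I.mem_procs.mpr ⟨hp1, hpm⟩
  rcases Nat.lt_or_ge I.n 2 with hn1 | hn2
  · right
    exact I.ratio_eq_one_of_n_one hsort (by have := I.hn; omega)
  obtain ⟨A0, hA0, hA0opt⟩ := I.exists_optimal
  by_cases hsp : I.s p < 1
  · -- processor p is empty in every optimal schedule: apply part (i)
    left
    apply I.not_minimal_of_empty_opt ⟨hopt1, hsort, htn⟩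
    refine ⟨A0, hA0, hA0opt, p, hp1, hpm, ?_⟩
    rw [Finset.eq_empty_iff_forall_notMem]
    intro i hi
    rw [Tstar, Finset.mem_filter] at hi
    have hti : 1 ≤ I.t i := by
      rw [← htn]
      exact I.tsorted i I.n (I.mem_tasks.mp hi.1).1 (I.mem_tasks.mp hi.1).2 le_rfl
    have hloadp : 1 ≤ I.load A0 p := by
      refine le_trans hti ?_
      apply Finset.single_le_sum (f := fun i => I.t i)
      · intro j hj; exact (I.t_pos (Finset.mem_filter.mp hj).1).le
      · exact Finset.mem_filter.mpr hi
    have : 1 / I.s p ≤ I.load A0 p / I.s p :=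
      (div_le_div_iff_of_pos_right (I.s_pos hpmem)).mpr hloadp
    have h2 : 1 < 1 / I.s p := by
      rw [lt_div_iff₀ (I.s_pos hpmem), one_mul]
      exact hsp
    have h3 := le_trans this (I.load_le_makespan hpmem)
    rw [hA0opt, hopt1] at h3
    linarith
  · push_neg at hsp
    by_cases hR : I.lptTime ≤ 1
    · right
      apply le_antisymm
      · rw [I.ratio_eq_lptTime hopt1]; exact hR
      · exact I.one_le_ratio' 
    · left
      intro hMin
      push_neg at hR
      have hn1' : 1 ≤ I.n - 1 := by omega
      have hn1le : I.n - 1 ≤ I.n := by omega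
      set J3 := I.prefixAt (I.n - 1) hn1' hn1le with hJ3def
      have hJ3opt : J3.opt ≤ 1 := by
        rw [← hopt1]; exact I.prefixAt_opt_le hn1' hn1le
      have hJ3ne : ¬(J3.m = I.m ∧ J3.n = I.n) := by
        rintro ⟨-, hnn⟩
        have : J3.n = I.n - 1 := rfl
        omega
      have hratio := hMin J3 le_rfl hn1le hJ3ne
      have hM' : J3.lptTime < I.lptTime := by
        calc J3.lptTime ≤ J3.ratio := J3.lptTime_le_ratio hJ3opt
          _ < I.ratio := hratio
          _ = I.lptTime := I.ratio_eq_lptTime hopt1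
      set c := I.lptA I.n with hcdef
      have hcmem : c ∈ I.procs := I.lptA_mem I.n
      have hnn1 : I.n - 1 + 1 = I.n := by omega
      -- the makespan is determined by the last step
      have hkey : I.lptTime ≤ I.cost (I.lptW (I.n - 1)) I.n c := by
        have hmax : I.lptTime ≤ max J3.lptTime (I.cost (I.lptW (I.n - 1)) I.n c) := by
          rw [lptTime, makespan]
          apply Finset.sup'_le
          intro q hq
          rw [I.load_lptA_eq]
          by_cases hqc : q = c
          · rw [hqc]
            have hstep : I.lptW I.n c = I.lptW (I.n - 1) c + I.t I.n := by
              conv_lhs => rw [← hnn1]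
              rw [I.lptW_succ, I.lptA_succ, hnn1,
                if_pos ⟨(hcdef.symm : I.lptA I.n = c), le_rfl⟩]
            rw [hstep]
            exact le_max_of_le_right (le_of_eq rfl)
          · have hstep : I.lptW I.n q = I.lptW (I.n - 1) q := by
              conv_lhs => rw [← hnn1]
              rw [I.lptW_succ, I.lptA_succ, hnn1,
                if_neg (fun hh => hqc ((hh.1.symm : q = I.lptA I.n).trans
                  (hcdef.symm : I.lptA I.n = c))), add_zero]
            rw [hstep]
            refine le_max_of_le_left ?_
            rw [hJ3def, I.prefixAt_lptTime hn1' hn1le]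
            exact Finset.le_sup' (fun r => I.lptW (I.n - 1) r / I.s r) hq
        rcases max_cases J3.lptTime (I.cost (I.lptW (I.n - 1)) I.n c) with ⟨he, -⟩ | ⟨he, -⟩
        · rw [he] at hmax; linarith
        · rwa [he] at hmax
      -- the cost of the chosen processor is at most the cost at p, which is ≤ 1
      have hwp : I.lptW (I.n - 1) p = 0 := by
        rw [← I.lptW_zero p]
        apply I.lptW_plateau (Nat.zero_le _)
        intro i hi1 hi2 hi3 hAi
        have : i ∈ I.T' p := by
          rw [T', Finset.mem_erase, T, Finset.mem_filter]
          exact ⟨by omega, I.mem_tasks.mpr ⟨by omega, hi3⟩, hAi⟩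
        rw [hTp] at this
        exact absurd this (Finset.notMem_empty i)
      have hcost_le : I.cost (I.lptW (I.n - 1)) I.n c ≤ I.cost (I.lptW (I.n - 1)) I.n p :=
        I.cost_choose_le hpmem
      have : I.cost (I.lptW (I.n - 1)) I.n p ≤ 1 := by
        rw [cost, hwp, htn, zero_add]
        rw [div_le_one (I.s_pos hpmem)]
        exact hsp
      linarith
  
end SchedInstance
/-- The polynomial `P_m(x) = 2x^m − x^{m−1} − ⋯ − x − 2`. -/
noncomputable def Pm (m : ℕ) (x : ℝ) : ℝ := 2 * x ^ m - (∑ k ∈ Finset.Ico 1 m, x ^ k) - 2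

/-- If in some optimal schedule some processor receives no task, then `I` is not
minimal; moreover, if `T'_I(p) = ∅` for some processor `p`, then `I` is not
minimal or `ρ_I = 1`. -/
theorem not_minimal_of_empty_processor (I : SchedInstance) (hnorm : I.Normalized) :
    ((∃ A, I.IsSchedule A ∧ I.makespan A = I.opt ∧
        ∃ p, 1 ≤ p ∧ p ≤ I.m ∧ I.Tstar A p = ∅) → ¬ I.Minimal) ∧
    ((∃ p, 1 ≤ p ∧ p ≤ I.m ∧ I.T' p = ∅) → ¬ I.Minimal ∨ I.ratio = 1) := by
  exact ⟨I.not_minimal_of_empty_opt hnorm, I.part2 hnorm⟩
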